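/- For m ≥ 1 and n ≥ 1, the number of functions f from {1,...,n} to the positive integers such that, when the values f(1),...,f(n) are sorted into increasing order b_1 ≤ b_2 ≤ ... ≤ b_n, we have b_i ≤ 1 + m(i-1) for all i, equals (mn+1)^{n-1}. -/

import Mathlib

/-- `f : Fin n → ℕ` is a `(1, m, m, …, m)`-parking function of size `n`:
its values are positive, and when sorted into increasing order
`b 0 ≤ b 1 ≤ ⋯ ≤ b (n-1)` they satisfy `b i ≤ 1 + m * i`
(i.e. the `i`-th smallest value, 1-indexed, is at most `1 + m * (i - 1)`). -/
def IsGenParkingFunction (m n : ℕ) (f : Fin n → ℕ) : Prop :=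
  (∀ j, 1 ≤ f j) ∧
  ∃ σ : Equiv.Perm (Fin n),
    Monotone (f ∘ σ) ∧ ∀ i : Fin n, f (σ i) ≤ 1 + m * (i : ℕ)

namespace GenParkAux

variable {m n : ℕ}

/-- number of coordinates of `u` whose value is `< t`. -/
def cnt (u : Fin n → ZMod (m * n + 1)) (t : ℕ) : ℕ :=
  (Finset.univ.filter fun j => (u j).val < t).card

/-- the counting form of the parking condition. -/
def Park (m n : ℕ) (u : Fin n → ZMod (m * n + 1)) : Prop :=
  ∀ k : Fin n, (k : ℕ) + 1 ≤ cnt u (m * (k : ℕ) + 1)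

lemma cnt_mono (u : Fin n → ZMod (m * n + 1)) : Monotone (cnt u) := by
  intro a b hab
  apply Finset.card_le_card
  intro j hj
  simp only [Finset.mem_filter] at hj ⊢
  exact ⟨hj.1, lt_of_lt_of_le hj.2 hab⟩

lemma cnt_zero (u : Fin n → ZMod (m * n + 1)) : cnt u 0 = 0 := by
  simp [cnt]

lemma cnt_le (u : Fin n → ZMod (m * n + 1)) (t : ℕ) : cnt u t ≤ n := by
  exact Finset.card_filter_le (Finset.univ : Finset (Fin n)) _ |>.trans (by simp)

lemma cnt_ge (u : Fin n → ZMod (m * n + 1)) {t : ℕ} (ht : m * n + 1 ≤ t) : cnt u t = n := by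
  refine le_antisymm (cnt_le u t) ?_
  have h : (Finset.univ : Finset (Fin n)) ⊆ Finset.univ.filter fun j => (u j).val < t := by
    intro j _
    simp only [Finset.mem_filter]
    exact ⟨Finset.mem_univ j, lt_of_lt_of_le (ZMod.val_lt (u j)) ht⟩
  simpa [cnt] using Finset.card_le_card h

lemma park_iff_cnt (hm : 1 ≤ m) (u : Fin n → ZMod (m * n + 1)) :
    Park m n u ↔ ∀ t, 1 ≤ t → t ≤ m * n → t ≤ m * cnt u t := by
  constructor
  · intro h t ht1 ht2
    obtain ⟨k, r, hr, hkr⟩ : ∃ k r, r < m ∧ t - 1 = m * k + r :=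
      ⟨(t - 1) / m, (t - 1) % m, Nat.mod_lt _ (by omega), (Nat.div_add_mod _ _).symm⟩
    have hkn : k < n := by
      have hlt : m * k < m * n := by omega
      exact Nat.lt_of_mul_lt_mul_left hlt
    have h1 : m * k + 1 ≤ t := by omega
    have h2 : t ≤ m * (k + 1) := by
      have : m * (k + 1) = m * k + m := by ring
      omega
    have hc := h ⟨k, hkn⟩
    simp only at hc
    have mono : cnt u (m * k + 1) ≤ cnt u t := cnt_mono u h1
    have : m * (k + 1) ≤ m * cnt u t := Nat.mul_le_mul_left m (by omega)
    omega
  · intro h k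
    have hb : m * ((k : ℕ) + 1) ≤ m * n := Nat.mul_le_mul_left m k.2
    have hmk : m * (k : ℕ) + 1 ≤ m * n := by
      have : m * ((k : ℕ) + 1) = m * (k : ℕ) + m := by ring
      omega
    have := h (m * (k : ℕ) + 1) (by omega) hmk
    by_contra hcon
    push_neg at hcon
    have : m * cnt u (m * (k : ℕ) + 1) ≤ m * (k : ℕ) := Nat.mul_le_mul_left m (by omega)
    omega


lemma cnt_shift (v : Fin n → ZMod (m * n + 1)) {d t : ℕ} (hd1 : 1 ≤ d) (hd2 : d ≤ m * n + 1)
    (ht : t ≤ m * n + 1) :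
    cnt (fun j => v j + ((m * n + 1 - d : ℕ) : ZMod (m * n + 1))) t + cnt v d
      = cnt v (d + t) + cnt v (d + t - (m * n + 1)) := by
  classical
  have hcval : (((m * n + 1 - d : ℕ) : ZMod (m * n + 1))).val = m * n + 1 - d :=
    ZMod.val_cast_of_lt (by omega)
  have key : ∀ j : Fin n, ((v j + ((m * n + 1 - d : ℕ) : ZMod (m * n + 1))).val < t) ↔
      ((d ≤ (v j).val ∧ (v j).val < d + t) ∨ (v j).val < d + t - (m * n + 1)) := by
    intro j
    have hx : (v j).val < m * n + 1 := ZMod.val_lt _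
    rw [ZMod.val_add, hcval]
    set x := (v j).val with hxd
    rcases le_or_gt d x with hcase | hcase
    · have heq : (x + (m * n + 1 - d)) % (m * n + 1) = x - d := by
        have h1 : x + (m * n + 1 - d) = (x - d) + (m * n + 1) := by omega
        rw [h1, Nat.add_mod_right]
        exact Nat.mod_eq_of_lt (by omega)
      rw [heq]
      omega
    · have heq : (x + (m * n + 1 - d)) % (m * n + 1) = x + (m * n + 1 - d) :=
        Nat.mod_eq_of_lt (by omega)
      rw [heq]
      omega
  unfold cnt
  rw [Finset.filter_congr (fun j _ => key j), Finset.filter_or,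
    Finset.card_union_of_disjoint (by
      rw [Finset.disjoint_filter]
      intro j _ hj
      omega)]
  have hsplit : (Finset.univ.filter fun j => (v j).val < d + t).card
      = (Finset.univ.filter fun j => d ≤ (v j).val ∧ (v j).val < d + t).card
        + (Finset.univ.filter fun j => (v j).val < d).card := by
    have heq : (Finset.univ.filter fun j => (v j).val < d + t)
        = Finset.univ.filter fun j => (d ≤ (v j).val ∧ (v j).val < d + t) ∨ (v j).val < d :=
      Finset.filter_congr (fun j _ => by omega)
    rw [heq, Finset.filter_or, Finset.card_union_of_disjoint (by
      rw [Finset.disjoint_filter]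
      intro j _ hj
      omega)]
  omega

/-- integer prefix-sum function: `hI v s = m * cnt v s - s`. -/
def hI (v : Fin n → ZMod (m * n + 1)) (s : ℕ) : ℤ := m * cnt v s - s

/-- `d` is the unique "good" rotation offset. -/
def GoodShift (v : Fin n → ZMod (m * n + 1)) (d : ℕ) : Prop :=
  1 ≤ d ∧ d ≤ m * n + 1 ∧ (∀ s, d < s → s ≤ m * n + 1 → hI v d ≤ hI v s) ∧
    (∀ s, 1 ≤ s → s < d → hI v d + 1 ≤ hI v s)

lemma park_shift (hm : 1 ≤ m) (v : Fin n → ZMod (m * n + 1)) {d : ℕ}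
    (hd1 : 1 ≤ d) (hd2 : d ≤ m * n + 1) :
    Park m n (fun j => v j + ((m * n + 1 - d : ℕ) : ZMod (m * n + 1))) ↔ GoodShift v d := by
  rw [park_iff_cnt hm]
  set u : Fin n → ZMod (m * n + 1) := fun j => v j + ((m * n + 1 - d : ℕ) : ZMod (m * n + 1))
    with hu
  constructor
  · intro h
    refine ⟨hd1, hd2, ?_, ?_⟩
    · intro s hs1 hs2
      have hcs := cnt_shift v hd1 hd2 (t := s - d) (by omega)
      rw [show d + (s - d) = s by omega, show s - (m * n + 1) = 0 by omega, cnt_zero] at hcs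
      rw [← hu] at hcs
      have hb := h (s - d) (by omega) (by omega)
      zify at hcs
      zify [show d ≤ s from le_of_lt hs1] at hb
      have hM : (m : ℤ) * cnt u (s - d) + m * cnt v d = m * cnt v s := by
        linear_combination (m : ℤ) * hcs
      unfold hI
      omega
    · intro s hs1 hs2
      have hcs := cnt_shift v hd1 hd2 (t := s + (m * n + 1) - d) (by omega)
      rw [show d + (s + (m * n + 1) - d) = s + (m * n + 1) by omega,
        show s + (m * n + 1) - (m * n + 1) = s by omega,
        cnt_ge v (t := s + (m * n + 1)) (by omega)] at hcs
      rw [← hu] at hcs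
      have hb := h (s + (m * n + 1) - d) (by omega) (by omega)
      zify at hcs
      zify [show d ≤ s + (m * n + 1) by omega] at hb
      have hM : (m : ℤ) * cnt u (s + (m * n + 1) - d) + m * cnt v d
          = m * n + m * cnt v s := by
        linear_combination (m : ℤ) * hcs
      unfold hI
      omega
  · rintro ⟨-, -, hA, hB⟩ t ht1 ht2
    have hcs := cnt_shift v hd1 hd2 (t := t) (by omega)
    rw [← hu] at hcs
    rcases le_or_gt (d + t) (m * n + 1) with hc | hc
    · rw [show d + t - (m * n + 1) = 0 by omega, cnt_zero] at hcs
      have hb := hA (d + t) (by omega) hc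
      unfold hI at hb
      zify at hcs
      have hM : (m : ℤ) * cnt u t + m * cnt v d = m * cnt v (d + t) := by
        linear_combination (m : ℤ) * hcs
      zify
      omega
    · rw [cnt_ge v (by omega : m * n + 1 ≤ d + t)] at hcs
      have hb := hB (d + t - (m * n + 1)) (by omega) (by omega)
      unfold hI at hb
      zify at hcs
      zify [show m * n + 1 ≤ d + t by omega] at hb
      have hM : (m : ℤ) * cnt u t + m * cnt v d
          = m * n + m * cnt v (d + t - (m * n + 1)) := by
        linear_combination (m : ℤ) * hcs
      zify
      omega


lemma existsUnique_goodShift (v : Fin n → ZMod (m * n + 1)) : ∃! d, GoodShift v d := by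
  classical
  set T := Finset.Icc 1 (m * n + 1) with hT
  have hTne : T.Nonempty := ⟨1, by simp [hT]⟩
  obtain ⟨b, hbT, hbmin⟩ := Finset.exists_min_image T (hI v) hTne
  set D := T.filter (fun d => ∀ s ∈ T, hI v d ≤ hI v s) with hD
  have hDne : D.Nonempty := ⟨b, Finset.mem_filter.2 ⟨hbT, hbmin⟩⟩
  set d := D.min' hDne with hdd
  have hdD : d ∈ D := D.min'_mem hDne
  obtain ⟨hdT, hdmin⟩ := Finset.mem_filter.1 hdD
  rw [hT, Finset.mem_Icc] at hdT
  have hgood : GoodShift v d := by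
    refine ⟨hdT.1, hdT.2, ?_, ?_⟩
    · intro s hs1 hs2
      exact hdmin s (by rw [hT, Finset.mem_Icc]; omega)
    · intro s hs1 hs2
      have hsT : s ∈ T := by rw [hT, Finset.mem_Icc]; omega
      have h1 : hI v d ≤ hI v s := hdmin s hsT
      rcases eq_or_lt_of_le h1 with heq | hlt
      · exfalso
        have hsD : s ∈ D := Finset.mem_filter.2 ⟨hsT, fun s' hs' => heq ▸ hdmin s' hs'⟩
        have := D.min'_le s hsD
        omega
      · omega
  refine ⟨d, hgood, ?_⟩
  rintro d' ⟨h1, h2, hA, hB⟩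
  by_contra hne
  rcases lt_or_gt_of_ne hne with hlt | hlt
  · have ha := hgood.2.2.2 d' h1 hlt
    have hb := hA d hlt hgood.2.1
    omega
  · have ha := hgood.2.2.1 d' hlt h2
    have hb := hB d hgood.1 hlt
    omega

lemma existsUnique_shift (hm : 1 ≤ m) (v : Fin n → ZMod (m * n + 1)) :
    ∃! c : ZMod (m * n + 1), Park m n (fun j => v j + c) := by
  obtain ⟨d, hd, hduniq⟩ := existsUnique_goodShift v
  refine ⟨((m * n + 1 - d : ℕ) : ZMod (m * n + 1)),
    (park_shift hm v hd.1 hd.2.1).2 hd, ?_⟩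
  intro c hc
  have hval : c.val < m * n + 1 := ZMod.val_lt c
  have h2 : ((m * n + 1 - (m * n + 1 - c.val) : ℕ) : ZMod (m * n + 1)) = c := by
    rw [show m * n + 1 - (m * n + 1 - c.val) = c.val by omega]
    exact ZMod.natCast_rightInverse c
  have hg : GoodShift v (m * n + 1 - c.val) := by
    apply (park_shift hm v (by omega) (by omega)).1
    rw [h2]
    exact hc
  have hh := hduniq _ hg
  rw [← hh]
  exact h2.symm

instance parkDec (u : Fin n → ZMod (m * n + 1)) : Decidable (Park m n u) :=
  inferInstanceAs (Decidable (∀ k : Fin n, (k : ℕ) + 1 ≤ cnt u (m * (k : ℕ) + 1)))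

lemma card_park (hm : 1 ≤ m) (hn : 1 ≤ n) :
    Fintype.card {u : Fin n → ZMod (m * n + 1) // Park m n u} = (m * n + 1) ^ (n - 1) := by
  classical
  have e : {u : Fin n → ZMod (m * n + 1) // Park m n u} × ZMod (m * n + 1)
      ≃ (Fin n → ZMod (m * n + 1)) := by
    apply Equiv.ofBijective (fun p => fun j => p.1.1 j + p.2)
    constructor
    · rintro ⟨⟨u, hu⟩, c⟩ ⟨⟨u', hu'⟩, c'⟩ h
      simp only at h
      set v : Fin n → ZMod (m * n + 1) := fun j => u j + c with hv
      have hv' : v = fun j => u' j + c' := h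
      have hP1 : Park m n (fun j => v j + (-c)) := by
        have : (fun j => v j + (-c)) = u := by
          funext j
          simp [hv, add_neg_cancel_right]
        rw [this]
        exact hu
      have hP2 : Park m n (fun j => v j + (-c')) := by
        have : (fun j => v j + (-c')) = u' := by
          funext j
          simp [hv', add_neg_cancel_right]
        rw [this]
        exact hu'
      obtain ⟨c₀, -, huniq⟩ := existsUnique_shift hm v
      have hcc : -c = -c' := (huniq _ hP1).trans (huniq _ hP2).symm
      have hcc' : c = c' := neg_injective hcc
      have huu : u = u' := by
        funext j
        have hvj : u j + c = u' j + c' := congrFun h j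
        rw [hcc'] at hvj
        exact add_right_cancel hvj
      subst hcc'
      simp [huu]
    · intro v
      obtain ⟨c, hc, -⟩ := existsUnique_shift hm v
      refine ⟨⟨⟨fun j => v j + c, hc⟩, -c⟩, ?_⟩
      funext j
      simp [add_neg_cancel_right]
  have hcard := Fintype.card_congr e
  rw [Fintype.card_prod, Fintype.card_fun, ZMod.card, Fintype.card_fin] at hcard
  obtain ⟨k, rfl⟩ : ∃ k, n = k + 1 := ⟨n - 1, by omega⟩
  rw [Nat.add_sub_cancel]
  rw [pow_succ] at hcard
  exact Nat.eq_of_mul_eq_mul_right (by omega) hcard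


lemma isGen_iff (f : Fin n → ℕ) :
    IsGenParkingFunction m n f ↔
      ((∀ j, 1 ≤ f j) ∧ ∀ k : Fin n, (k : ℕ) + 1 ≤
        (Finset.univ.filter fun j => f j ≤ 1 + m * (k : ℕ)).card) := by
  constructor
  · rintro ⟨hpos, σ, hmono, hb⟩
    refine ⟨hpos, fun k => ?_⟩
    have hsub : (Finset.Iic k).image σ ⊆ Finset.univ.filter fun j => f j ≤ 1 + m * (k : ℕ) := by
      intro j hj
      simp only [Finset.mem_image, Finset.mem_Iic] at hj
      obtain ⟨i, hik, rfl⟩ := hj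
      simp only [Finset.mem_filter, Finset.mem_univ, true_and]
      exact le_trans (hmono hik) (hb k)
    have hcard := Finset.card_le_card hsub
    rwa [Finset.card_image_of_injective _ σ.injective, Fin.card_Iic] at hcard
  · rintro ⟨hpos, hcnt⟩
    refine ⟨hpos, Tuple.sort f, Tuple.monotone_sort f, ?_⟩
    intro i
    by_contra hcon
    push_neg at hcon
    have hsub : (Finset.univ.filter fun j => f j ≤ 1 + m * (i : ℕ))
        ⊆ (Finset.Iio i).image (Tuple.sort f) := by
      intro j hj
      simp only [Finset.mem_filter, Finset.mem_univ, true_and] at hj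
      simp only [Finset.mem_image, Finset.mem_Iio]
      refine ⟨(Tuple.sort f)⁻¹ j, ?_, by simp⟩
      by_contra hge
      push_neg at hge
      have hmono := Tuple.monotone_sort f hge
      simp only [Function.comp_apply, Equiv.Perm.inv_def, Equiv.apply_symm_apply] at hmono
      omega
    have hcard := Finset.card_le_card hsub
    rw [Finset.card_image_of_injective _ (Tuple.sort f).injective, Fin.card_Iio] at hcard
    have := hcnt i
    omega

lemma isGen_bound (hm : 1 ≤ m) (f : Fin n → ℕ) (hf : IsGenParkingFunction m n f) :
    ∀ j, f j ≤ m * n := by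
  obtain ⟨hpos, σ, hmono, hb⟩ := hf
  intro j
  have h1 : f (σ (σ⁻¹ j)) ≤ 1 + m * ((σ⁻¹ j : Fin n) : ℕ) := hb _
  rw [show σ (σ⁻¹ j) = j by simp] at h1
  have h2 : ((σ⁻¹ j : Fin n) : ℕ) ≤ n - 1 := by
    have := (σ⁻¹ j).2
    omega
  have h3 : m * ((σ⁻¹ j : Fin n) : ℕ) ≤ m * (n - 1) := Nat.mul_le_mul_left _ h2
  have h4 : m * (n - 1 + 1) = m * (n - 1) + m := Nat.mul_succ _ _
  have h5 : n - 1 + 1 = n := by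
    have := (σ⁻¹ j).2.trans_le (Nat.le_refl n)
    omega
  rw [h5] at h4
  omega

end GenParkAux

theorem stmt_8 (m n : ℕ) (hm : 1 ≤ m) (hn : 1 ≤ n) :
    {f : Fin n → ℕ | IsGenParkingFunction m n f}.ncard = (m * n + 1) ^ (n - 1) := by
  classical
  have hE : {f : Fin n → ℕ | IsGenParkingFunction m n f}
      ≃ {u : Fin n → ZMod (m * n + 1) // GenParkAux.Park m n u} := by
    refine
      { toFun := fun fp => ⟨fun j => ((fp.1 j - 1 : ℕ) : ZMod (m * n + 1)), ?_⟩
        invFun := fun up => ⟨fun j => (up.1 j).val + 1, ?_⟩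
        left_inv := ?_
        right_inv := ?_ }
    · -- Park condition
      obtain ⟨hpos, hcnt⟩ := (GenParkAux.isGen_iff fp.1).1 fp.2
      have hbd := GenParkAux.isGen_bound hm fp.1 fp.2
      intro k
      have hval : ∀ j, (((fp.1 j - 1 : ℕ) : ZMod (m * n + 1))).val = fp.1 j - 1 := fun j =>
        ZMod.val_cast_of_lt (by have := hbd j; omega)
      have : (Finset.univ.filter fun j =>
            (((fp.1 j - 1 : ℕ) : ZMod (m * n + 1))).val < m * (k : ℕ) + 1)
          = Finset.univ.filter fun j => fp.1 j ≤ 1 + m * (k : ℕ) := by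
        refine Finset.filter_congr fun j _ => ?_
        rw [hval j]
        have := hpos j
        omega
      unfold GenParkAux.cnt
      rw [this]
      exact hcnt k
    · -- IsGenParkingFunction condition
      show IsGenParkingFunction m n _
      rw [GenParkAux.isGen_iff]
      refine ⟨fun j => by omega, fun k => ?_⟩
      have hp := up.2 k
      unfold GenParkAux.cnt at hp
      have : (Finset.univ.filter fun j => (up.1 j).val + 1 ≤ 1 + m * (k : ℕ))
          = Finset.univ.filter fun j => (up.1 j).val < m * (k : ℕ) + 1 :=
        Finset.filter_congr fun j _ => by omega
      rw [this]
      exact hp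
    · -- left inverse
      rintro ⟨f, hf⟩
      have hbd := GenParkAux.isGen_bound hm f hf
      have hpos := hf.1
      apply Subtype.ext
      funext j
      simp only
      rw [ZMod.val_cast_of_lt (by have := hbd j; omega)]
      have := hpos j
      omega
    · -- right inverse
      rintro ⟨u, hu⟩
      apply Subtype.ext
      funext j
      simp only [Nat.add_sub_cancel]
      exact ZMod.natCast_rightInverse (u j)
  rw [← Nat.card_coe_set_eq, Nat.card_congr hE, Nat.card_eq_fintype_card,
    GenParkAux.card_park hm hn]
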